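/- The relation C_1^2 C_2^2 = (1−4^4 q)^{−1} for local P^3 (eq. (7.6)): In ℚ[[q]] define I_{10} = 4·Σ_{d≥1} (4d−1)!/(d!)^4 q^d, I_{20} = 4·Σ_{d≥1} (4d−1)!/(d!)^4 (4Har[4d−1] − 4Har[d]) q^d with Har[m] = Σ_{k=1}^{m} 1/k, C_1 = 1 + 𝖣I_{10}, J_{10} = (I_{10} + 𝖣I_{20})/C_1, and C_2 = 1 + 𝖣J_{10}, where 𝖣 = q·d/dq. Then (1 − 256q)·C_1^2·C_2^2 = 1 in ℚ[[q]]. -/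

import Mathlib

/-!
STATEMENT 10: The relation C₁²C₂² = (1−4⁴q)⁻¹ for local P³:
(1 − 256q)·C₁²·C₂² = 1 in ℚ[[q]].
-/

noncomputable section

/-- The derivation `𝖣 = q·d/dq` on `ℚ[[q]]`. -/
def Dq (G : PowerSeries ℚ) : PowerSeries ℚ :=
  PowerSeries.mk fun d => (d : ℚ) * PowerSeries.coeff d G

/-- Harmonic number `Har[m] = Σ_{k=1}^m 1/k`. -/
def Har (m : ℕ) : ℚ := ∑ k ∈ Finset.range m, ((k : ℚ) + 1)⁻¹

/-- `I₁₀ = 4·Σ_{d≥1} (4d−1)!/(d!)^4 q^d`. -/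
def I₁₀ : PowerSeries ℚ :=
  PowerSeries.mk fun d => if d = 0 then 0 else
    4 * ((4 * d - 1).factorial : ℚ) / ((d.factorial : ℚ)) ^ 4

/-- `I₂₀ = 4·Σ_{d≥1} (4d−1)!/(d!)^4 (4Har[4d−1] − 4Har[d]) q^d`. -/
def I₂₀ : PowerSeries ℚ :=
  PowerSeries.mk fun d => if d = 0 then 0 else
    4 * ((4 * d - 1).factorial : ℚ) / ((d.factorial : ℚ)) ^ 4
      * (4 * Har (4 * d - 1) - 4 * Har d)

/-- `C₁ = 1 + 𝖣I₁₀`. -/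
def C₁ : PowerSeries ℚ := 1 + Dq I₁₀

/-- `J₁₀ = (I₁₀ + 𝖣I₂₀)/C₁`. -/
def J₁₀ : PowerSeries ℚ := (I₁₀ + Dq I₂₀) * C₁⁻¹

/-- `C₂ = 1 + 𝖣J₁₀`. -/
def C₂ : PowerSeries ℚ := 1 + Dq J₁₀


open PowerSeries

/- ## Basic lemmas on the derivation `Dq` -/

lemma coeff_Dq (f : PowerSeries ℚ) (d : ℕ) : coeff d (Dq f) = d * coeff d f := by
  simp [Dq]

lemma Dq_add (f g : PowerSeries ℚ) : Dq (f + g) = Dq f + Dq g := by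
  ext d; simp [coeff_Dq, mul_add]

lemma Dq_sub (f g : PowerSeries ℚ) : Dq (f - g) = Dq f - Dq g := by
  ext d; simp [coeff_Dq, mul_sub]

lemma Dq_mul (f g : PowerSeries ℚ) : Dq (f * g) = Dq f * g + f * Dq g := by
  ext d
  simp only [coeff_Dq, coeff_mul, map_add, Finset.mul_sum, ← Finset.sum_add_distrib]
  refine Finset.sum_congr rfl fun p hp => ?_
  rw [Finset.HasAntidiagonal.mem_antidiagonal] at hp
  rw [← hp]
  push_cast
  ring

lemma Dq_one : Dq (1 : PowerSeries ℚ) = 0 := by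
  ext d; rcases d with _ | e <;> simp [coeff_Dq]

lemma Dq_C (a : ℚ) : Dq (C a) = 0 := by
  ext d; rcases d with _ | e <;> simp [coeff_Dq, coeff_C]

lemma Dq_X : Dq (X : PowerSeries ℚ) = X := by
  ext d
  rcases d with _ | e
  · simp [coeff_Dq]
  · rcases e with _ | e <;> simp [coeff_Dq, coeff_X, Nat.succ_ne_zero]

/- ## Coefficient helpers -/

lemma coeff_CXmul (a : ℚ) (f : PowerSeries ℚ) (e : ℕ) :
    coeff (e+1) (C a * X * f) = a * coeff e f := by
  rw [mul_assoc, coeff_C_mul, coeff_succ_X_mul]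

lemma coeff_CXmul_zero (a : ℚ) (f : PowerSeries ℚ) :
    coeff 0 (C a * X * f) = 0 := by
  rw [mul_assoc, coeff_C_mul, coeff_zero_X_mul, mul_zero]

lemma coeff_W_mul (f : PowerSeries ℚ) (e : ℕ) :
    coeff (e+1) ((1 - C 256 * X) * f) = coeff (e+1) f - 256 * coeff e f := by
  rw [sub_mul, one_mul, map_sub, coeff_CXmul]

lemma coeff_W_mul_zero (f : PowerSeries ℚ) :
    coeff 0 ((1 - C 256 * X) * f) = coeff 0 f := by
  rw [sub_mul, one_mul, map_sub, coeff_CXmul_zero, sub_zero]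

lemma fact4 (n : ℕ) : (n + 4).factorial = (n+4)*((n+3)*((n+2)*((n+1)*n.factorial))) := by
  rw [show n+4 = (n+3)+1 by ring, Nat.factorial_succ]
  rw [show n+3 = (n+2)+1 by ring, Nat.factorial_succ]
  rw [show n+2 = (n+1)+1 by ring, Nat.factorial_succ]
  rw [Nat.factorial_succ]

/- ## The series `A = Σ (4d)!/(d!)^4 q^d`, `u = I₁₀ + 𝖣I₂₀`, `g = Σ binom(2d,d) 64^d q^d` -/

def Aser : PowerSeries ℚ :=
  PowerSeries.mk fun d => ((4*d).factorial : ℚ) / ((d.factorial : ℚ))^4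

lemma coeff_Aser (d : ℕ) : coeff d Aser = ((4*d).factorial : ℚ) / ((d.factorial : ℚ))^4 := by
  simp [Aser]

def useries : PowerSeries ℚ := I₁₀ + Dq I₂₀

def gser : PowerSeries ℚ :=
  PowerSeries.mk fun d => (Nat.centralBinom d : ℚ) * 64^d

lemma Har_succ (m : ℕ) : Har (m+1) = Har m + ((m:ℚ)+1)⁻¹ := by
  simp [Har, Finset.sum_range_succ]

lemma coeff_useries (d : ℕ) : coeff d useries =
    (if d = 0 then 0 else 4 * ((4 * d - 1).factorial : ℚ) / ((d.factorial : ℚ)) ^ 4)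
    + d * (if d = 0 then 0 else 4 * ((4 * d - 1).factorial : ℚ) / ((d.factorial : ℚ)) ^ 4
      * (4 * Har (4 * d - 1) - 4 * Har d)) := by
  simp [useries, coeff_Dq, I₁₀, I₂₀]

/- ## The Picard–Fuchs type ODEs -/

lemma hA : (1 - C 256 * X) * Dq (Dq (Dq Aser)) =
    C 384 * X * Dq (Dq Aser) + C 176 * X * Dq Aser + C 24 * X * Aser := by
  ext d
  rcases d with _ | e
  · simp [coeff_W_mul_zero, coeff_CXmul_zero, coeff_Dq]
  · simp only [map_add, coeff_W_mul, coeff_CXmul]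
    simp only [coeff_Dq, coeff_Aser]
    rw [show 4*(e+1) = 4*e+4 by ring, fact4, Nat.factorial_succ]
    have hG : ((e.factorial : ℚ)) ≠ 0 := Nat.cast_ne_zero.mpr (Nat.factorial_ne_zero e)
    have hF : (((4*e).factorial : ℚ)) ≠ 0 := Nat.cast_ne_zero.mpr (Nat.factorial_ne_zero _)
    have h1 : ((e:ℚ)+1) ≠ 0 := by positivity
    push_cast
    field_simp
    ring

lemma hu : (1 - C 256 * X) * Dq (Dq (Dq useries)) + C 3 * ((1 - C 256 * X) * Dq (Dq Aser)) =
    C 384 * X * Dq (Dq useries) + C 176 * X * Dq useries + C 24 * X * useries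
    + C 768 * X * Dq Aser + C 176 * X * Aser := by
  ext d
  rcases d with _ | e
  · simp [coeff_W_mul_zero, coeff_CXmul_zero, coeff_Dq, coeff_C_mul, Dq]
  rcases e with _ | e
  · simp only [map_add, coeff_W_mul, coeff_C_mul, coeff_CXmul]
    simp only [coeff_Dq, coeff_Aser, coeff_useries]
    norm_num [Har, Finset.sum_range_succ, Nat.factorial]
  · simp only [map_add, coeff_W_mul, coeff_C_mul, coeff_CXmul]
    simp only [coeff_Dq, coeff_Aser, coeff_useries, Nat.succ_ne_zero, if_false,
      Nat.add_eq_zero, and_false, false_and]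
    rw [show 4*(e+1+1)-1 = (4*e+3)+4 by omega, show (4*(e+1)-1) = 4*e+3 by omega,
      show 4*(e+1+1) = (4*e+4)+4 by omega, show 4*(e+1) = (4*e+3)+1 by omega,
      fact4 (4*e+3), fact4 (4*e+4), Nat.factorial_succ (4*e+3),
      show e+1+1 = (e+1)+1 by omega, Nat.factorial_succ (e+1), Nat.factorial_succ e]
    rw [show (4*e+3)+4 = ((4*e+3)+3)+1 by omega, Har_succ,
      show (4*e+3)+3 = ((4*e+3)+2)+1 by omega, Har_succ,
      show (4*e+3)+2 = ((4*e+3)+1)+1 by omega, Har_succ, Har_succ, Har_succ (e+1)]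
    have hG : ((e.factorial : ℚ)) ≠ 0 := Nat.cast_ne_zero.mpr (Nat.factorial_ne_zero e)
    have hF : (((4*e+3).factorial : ℚ)) ≠ 0 := Nat.cast_ne_zero.mpr (Nat.factorial_ne_zero _)
    have h1 : ((e:ℚ)+1) ≠ 0 := by positivity
    have h2 : ((e:ℚ)+2) ≠ 0 := by positivity
    have h3 : (4*(e:ℚ)+4) ≠ 0 := by positivity
    have h4 : (4*(e:ℚ)+5) ≠ 0 := by positivity
    have h5 : (4*(e:ℚ)+6) ≠ 0 := by positivity
    have h6 : (4*(e:ℚ)+7) ≠ 0 := by positivity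
    push_cast
    field_simp
    ring

lemma hg : (1 - C 256 * X) * Dq gser = C 128 * X * gser := by
  ext d
  rcases d with _ | e
  · simp [coeff_W_mul_zero, coeff_CXmul_zero, coeff_Dq]
  · rw [coeff_W_mul, coeff_CXmul]
    simp only [coeff_Dq, gser, coeff_mk]
    have h : (((e:ℚ)+1) * Nat.centralBinom (e+1) : ℚ) = 2*(2*e+1) * Nat.centralBinom e := by
      exact_mod_cast congrArg (Nat.cast (R := ℚ)) (Nat.succ_mul_centralBinom_succ e)
    push_cast
    linear_combination ((64:ℚ))^e * 64 * h

/- ## Numeral versions and derived ODEs -/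

lemma Dq_ofNat (n : ℕ) [n.AtLeastTwo] :
    Dq (no_index (OfNat.ofNat n) : PowerSeries ℚ) = 0 := by
  rw [← map_ofNat C n, Dq_C]

lemma hA' : (1 - 256 * X) * Dq (Dq (Dq Aser)) =
    384 * X * Dq (Dq Aser) + 176 * X * Dq Aser + 24 * X * Aser := by
  have h := hA; simp only [map_ofNat] at h; exact h

lemma hu' : (1 - 256 * X) * Dq (Dq (Dq useries)) + 3 * ((1 - 256 * X) * Dq (Dq Aser)) =
    384 * X * Dq (Dq useries) + 176 * X * Dq useries + 24 * X * useries
    + 768 * X * Dq Aser + 176 * X * Aser := by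
  have h := hu; simp only [map_ofNat] at h; exact h

lemma hg' : (1 - 256 * X) * Dq gser = 128 * X * gser := by
  have h := hg; simp only [map_ofNat] at h; exact h

lemma hg2 : (1 - 256 * X) * Dq (Dq gser) = 384 * X * Dq gser + 128 * X * gser := by
  have h := congrArg Dq hg'
  simp only [Dq_mul, Dq_sub, Dq_one, Dq_X, Dq_ofNat, zero_mul, mul_zero, add_zero,
    zero_add, zero_sub, sub_zero] at h
  linear_combination h

lemma hg3 : (1 - 256 * X) * Dq (Dq (Dq gser)) =
    640 * X * Dq (Dq gser) + 512 * X * Dq gser + 128 * X * gser := by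
  have h := congrArg Dq hg2
  simp only [Dq_mul, Dq_add, Dq_sub, Dq_one, Dq_X, Dq_ofNat, zero_mul, mul_zero, add_zero,
    zero_add, zero_sub, sub_zero] at h
  linear_combination h

/- ## The Wronskian triples -/

def p1s : PowerSeries ℚ := Aser * Aser + Aser * Dq useries - useries * Dq Aser
def p2s : PowerSeries ℚ := 2 * (Aser * Dq Aser) + Aser * Dq (Dq useries) - useries * Dq (Dq Aser)
def p3s : PowerSeries ℚ := 2 * (Dq Aser * Dq Aser) + Dq Aser * Dq (Dq useries)
  - Aser * Dq (Dq Aser) - Dq useries * Dq (Dq Aser)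
def q1s : PowerSeries ℚ := gser * Aser
def ts : PowerSeries ℚ := (1 - 256 * X) * Dq (Dq q1s) - 384 * X * Dq q1s - 176 * X * q1s

lemma e1 : Dq p1s = p2s := by
  unfold p1s p2s
  simp only [Dq_mul, Dq_add, Dq_sub, Dq_one, Dq_X, Dq_ofNat, zero_mul, mul_zero, add_zero,
    zero_add, zero_sub, sub_zero]
  ring

lemma e2 : (1 - 256 * X) * Dq p2s = (1 - 256 * X) * p3s + 384 * X * p2s + 176 * X * p1s := by
  unfold p1s p2s p3s
  simp only [Dq_mul, Dq_add, Dq_sub, Dq_one, Dq_X, Dq_ofNat, zero_mul, mul_zero, add_zero,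
    zero_add, zero_sub, sub_zero]
  linear_combination Aser * hu' - useries * hA'

lemma e3 : (1 - 256 * X) * Dq p3s = 384 * X * p3s - 24 * X * p1s := by
  unfold p1s p3s
  simp only [Dq_mul, Dq_add, Dq_sub, Dq_one, Dq_X, Dq_ofNat, zero_mul, mul_zero, add_zero,
    zero_add, zero_sub, sub_zero]
  linear_combination Dq Aser * hu' - (Aser + Dq useries) * hA'

lemma wne : (1 - 256 * X : PowerSeries ℚ) ≠ 0 := by
  intro h
  have h0 := congrArg (constantCoeff) h
  simp at h0

lemma eq3q : (1 - 256 * X) * Dq ts = 128 * X * ts - 24 * X * ((1 - 256 * X) * q1s) := by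
  refine mul_left_cancel₀ (pow_ne_zero 4 wne) ?_
  unfold ts q1s
  simp only [Dq_mul, Dq_add, Dq_sub, Dq_one, Dq_X, Dq_ofNat, zero_mul, mul_zero, add_zero,
    zero_add, zero_sub, sub_zero]
  linear_combination (Aser * (1-256*X)^5) * hg3
    + ((3 * Dq Aser * (1-256*X) - 128 * X * Aser) * (1-256*X)^4) * hg2
    + ((3 * Dq (Dq Aser) * (1-256*X) - 384 * X * Dq Aser - 48 * X * Aser) * (1-256*X)^4) * hg'
    + (gser * (1-256*X)^5) * hA'

/- ## Constant coefficients -/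

lemma constDq (f : PowerSeries ℚ) : constantCoeff (Dq f) = 0 := by
  rw [← coeff_zero_eq_constantCoeff_apply, coeff_Dq]; simp

lemma constA : constantCoeff Aser = 1 := by
  rw [← coeff_zero_eq_constantCoeff_apply, coeff_Aser]
  norm_num [Nat.factorial]

lemma constU : constantCoeff useries = 0 := by
  rw [← coeff_zero_eq_constantCoeff_apply, coeff_useries]; simp

lemma constG : constantCoeff gser = 1 := by
  rw [← coeff_zero_eq_constantCoeff_apply]
  simp [gser, Nat.centralBinom_zero]

/- ## Uniqueness for the first-order system -/

lemma triple_zero (v1 v2 v3 : PowerSeries ℚ)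
    (h1 : Dq v1 = v2)
    (h2 : (1 - 256*X) * Dq v2 = v3 + 384*X*v2 + 176*X*v1)
    (h3 : (1 - 256*X) * Dq v3 = 128*X*v3 - 24*X*((1 - 256*X)*v1))
    (z1 : coeff 0 v1 = 0) (z2 : coeff 0 v2 = 0) (z3 : coeff 0 v3 = 0) :
    v1 = 0 := by
  rw [show ((256 : PowerSeries ℚ)) = C 256 from (map_ofNat _ _).symm,
      show ((384 : PowerSeries ℚ)) = C 384 from (map_ofNat _ _).symm,
      show ((176 : PowerSeries ℚ)) = C 176 from (map_ofNat _ _).symm] at h2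
  rw [show ((256 : PowerSeries ℚ)) = C 256 from (map_ofNat _ _).symm,
      show ((128 : PowerSeries ℚ)) = C 128 from (map_ofNat _ _).symm,
      show ((24 : PowerSeries ℚ)) = C 24 from (map_ofNat _ _).symm] at h3
  have key : ∀ d, coeff d v1 = 0 ∧ coeff d v2 = 0 ∧ coeff d v3 = 0 := by
    intro d
    induction d using Nat.strong_induction_on with
    | _ d IH =>
      rcases d with _ | e
      · exact ⟨z1, z2, z3⟩
      · have hv1e : coeff e v1 = 0 := (IH e (by omega)).1
        have hv2e : coeff e v2 = 0 := (IH e (by omega)).2.1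
        have hv3e : coeff e v3 = 0 := (IH e (by omega)).2.2
        have hWv1 : coeff e ((1 - C 256 * X) * v1) = 0 := by
          rcases e with _ | e'
          · rw [coeff_W_mul_zero]; exact hv1e
          · rw [coeff_W_mul, hv1e, (IH e' (by omega)).1]; ring
        have hne : ((e:ℚ)+1) ≠ 0 := by positivity
        have hv3 : coeff (e+1) v3 = 0 := by
          have h3c := congrArg (coeff (e+1)) h3
          rw [coeff_W_mul, coeff_Dq, coeff_Dq, map_sub, coeff_CXmul, coeff_CXmul,
            hv3e, hWv1] at h3c
          have h'' : ((e:ℚ)+1) * coeff (e+1) v3 = 0 := by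
            push_cast at h3c ⊢; linear_combination h3c
          exact (mul_eq_zero.mp h'').resolve_left hne
        have hv2 : coeff (e+1) v2 = 0 := by
          have h2c := congrArg (coeff (e+1)) h2
          rw [coeff_W_mul, coeff_Dq, coeff_Dq, map_add, map_add, coeff_CXmul, coeff_CXmul,
            hv2e, hv1e, hv3] at h2c
          have h'' : ((e:ℚ)+1) * coeff (e+1) v2 = 0 := by
            push_cast at h2c ⊢; linear_combination h2c
          exact (mul_eq_zero.mp h'').resolve_left hne
        have hv1 : coeff (e+1) v1 = 0 := by
          have h1c := congrArg (coeff (e+1)) h1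
          rw [coeff_Dq, hv2] at h1c
          have h'' : ((e:ℚ)+1) * coeff (e+1) v1 = 0 := by
            push_cast at h1c ⊢; linear_combination h1c
          exact (mul_eq_zero.mp h'').resolve_left hne
        exact ⟨hv1, hv2, hv3⟩
  ext d
  rw [(key d).1, map_zero]

/- ## The Wronskian identity `p1s = g·A` -/

lemma hstar : p1s = gser * Aser := by
  have hz : p1s - q1s = 0 := by
    refine triple_zero (p1s - q1s) (p2s - Dq q1s) ((1 - 256*X)*p3s - ts) ?_ ?_ ?_ ?_ ?_ ?_
    · rw [Dq_sub, e1]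
    · rw [Dq_sub]
      unfold ts
      linear_combination e2
    · rw [Dq_sub, Dq_mul]
      simp only [Dq_sub, Dq_one, Dq_ofNat, Dq_mul, Dq_X, zero_mul, mul_zero, add_zero,
        zero_add, zero_sub, sub_zero]
      linear_combination (1 - 256*X) * e3 - eq3q
    · simp only [map_sub, coeff_zero_eq_constantCoeff_apply, map_mul, map_add]
      simp [p1s, q1s, constA, constU, constG, constDq]
    · simp only [map_sub, coeff_zero_eq_constantCoeff_apply, map_mul, map_add]
      simp [p2s, q1s, constA, constU, constG, constDq]
    · simp only [map_sub, coeff_zero_eq_constantCoeff_apply, map_mul, map_add]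
      simp [p3s, ts, q1s, constA, constU, constG, constDq]
  have := sub_eq_zero.mp hz
  rw [this]; rfl

/- ## `(1-256q)·g² = 1` -/

lemma hWgg : (1 - 256*X) * (gser * gser) = 1 := by
  have hDzero : Dq ((1 - 256*X) * (gser * gser)) = 0 := by
    simp only [Dq_mul, Dq_sub, Dq_one, Dq_X, Dq_ofNat, zero_mul, mul_zero, add_zero,
      zero_add, zero_sub, sub_zero]
    linear_combination (2 * gser) * hg'
  ext d
  rcases d with _ | e
  · rw [coeff_zero_eq_constantCoeff_apply, coeff_zero_eq_constantCoeff_apply]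
    simp [constG]
  · have hc := congrArg (coeff (e+1)) hDzero
    rw [coeff_Dq, map_zero] at hc
    have hne : ((e:ℚ)+1) ≠ 0 := by positivity
    have h'' : ((e:ℚ)+1) * coeff (e+1) ((1 - 256*X) * (gser * gser)) = 0 := by
      push_cast at hc ⊢; linear_combination hc
    rw [(mul_eq_zero.mp h'').resolve_left hne, coeff_one]
    simp

/- ## Assembly -/

lemma C1_eq : C₁ = Aser := by
  ext d
  rcases d with _ | e
  · rw [C₁, map_add, coeff_Aser, coeff_one, coeff_Dq]
    norm_num [Nat.factorial]
  · rw [C₁, map_add, coeff_Aser, coeff_one, coeff_Dq]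
    simp only [Nat.succ_ne_zero, if_false, I₁₀, coeff_mk]
    rw [show (4*(e+1)-1) = 4*e+3 by omega, show 4*(e+1) = (4*e+3)+1 by omega,
      Nat.factorial_succ (4*e+3)]
    have hG : ((e+1).factorial : ℚ) ≠ 0 := Nat.cast_ne_zero.mpr (Nat.factorial_ne_zero _)
    have hG4 : ((e+1).factorial : ℚ)^4 ≠ 0 := pow_ne_zero _ hG
    rw [zero_add, ← mul_div_assoc, div_eq_div_iff hG4 hG4]
    push_cast
    ring

lemma Aser_ne : Aser ≠ 0 := by
  intro h
  have := congrArg (constantCoeff) h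
  rw [constA, map_zero] at this
  norm_num at this

theorem stmt10 : (1 - 256 * PowerSeries.X) * C₁ ^ 2 * C₂ ^ 2 = 1 := by
  have hinv : Aser * Aser⁻¹ = 1 :=
    PowerSeries.mul_inv_cancel _ (by rw [constA]; norm_num)
  have hDinv : Dq Aser * Aser⁻¹ + Aser * Dq Aser⁻¹ = 0 := by
    have h := congrArg Dq hinv
    rw [Dq_mul, Dq_one] at h
    exact h
  have hC2 : Aser * Aser * C₂ = gser * Aser := by
    rw [C₂, J₁₀, C1_eq, show I₁₀ + Dq I₂₀ = useries from rfl, Dq_mul]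
    have hp := hstar
    unfold p1s at hp
    linear_combination hp + (Aser * Dq useries - useries * Dq Aser) * hinv
      + (useries * Aser) * hDinv
  have hAC2 : Aser * C₂ = gser := by
    refine mul_left_cancel₀ Aser_ne ?_
    linear_combination hC2
  rw [C1_eq]
  linear_combination hWgg + ((1 - 256*X) * (Aser * C₂ + gser)) * hAC2

end
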